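/- Assume d > 0 and d(a-1)^2 - 4 > 0, b = c = 0, and (a-1)²d - (a+1)√(d((a-1)²d - 4)) - 6 < 0. Then the characteristic polynomial of the Jacobian of the FitzHugh–Nagumo system at P_- equals λ(λ² + ω²) where ω² = -((a-1)²d - (a+1)√(d((a-1)²d - 4)) - 6)/(2d) > 0; hence P_- is a zero–Hopf equilibrium. -/

import Mathlib

open Polynomial

/-- Jacobian of the FitzHugh–Nagumo vector field at the point (x, y, z). -/
def FHNJac (a b c d x : ℝ) : Matrix (Fin 3) (Fin 3) ℝ :=
  !![0, 0, 1; b, -(b * d), 0; 3 * x ^ 2 - 2 * (a + 1) * x + a, 1, c]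

theorem fhn_Pminus_zero_hopf (a b c d : ℝ) (hd : 0 < d)
    (h : 0 < d * (a - 1) ^ 2 - 4) (hb : b = 0) (hc : c = 0)
    (hneg : (a - 1) ^ 2 * d - (a + 1) * Real.sqrt (d * ((a - 1) ^ 2 * d - 4)) - 6 < 0) :
    0 < -(((a - 1) ^ 2 * d - (a + 1) * Real.sqrt (d * ((a - 1) ^ 2 * d - 4)) - 6)
        / (2 * d)) ∧
    (FHNJac a b c d ((1 + a) / 2 - (1 / 2) * Real.sqrt ((a - 1) ^ 2 - 4 / d))).charpoly =
      X * (X ^ 2 + C (-(((a - 1) ^ 2 * d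
          - (a + 1) * Real.sqrt (d * ((a - 1) ^ 2 * d - 4)) - 6) / (2 * d)))) := by
  subst hb hc
  have hd' : d ≠ 0 := ne_of_gt hd
  have h1 : 0 < (a - 1) ^ 2 - 4 / d := by
    rw [sub_pos, div_lt_iff₀ hd]
    nlinarith
  set s := Real.sqrt ((a - 1) ^ 2 - 4 / d) with hs
  have hs2 : s ^ 2 = (a - 1) ^ 2 - 4 / d := Real.sq_sqrt h1.le
  have hsd : Real.sqrt (d * ((a - 1) ^ 2 * d - 4)) = d * s := by
    rw [show d * ((a - 1) ^ 2 * d - 4) = d ^ 2 * ((a - 1) ^ 2 - 4 / d) by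
      field_simp]
    rw [Real.sqrt_mul (sq_nonneg d), Real.sqrt_sq hd.le]
  refine ⟨?_, ?_⟩
  · have := div_neg_of_neg_of_pos hneg (by linarith : (0:ℝ) < 2 * d)
    linarith
  · set x := (1 + a) / 2 - (1 / 2) * s with hx
    have hm : 3 * x ^ 2 - 2 * (a + 1) * x + a =
        ((a - 1) ^ 2 * d - (a + 1) * Real.sqrt (d * ((a - 1) ^ 2 * d - 4)) - 6) / (2 * d) := by
      have key : s ^ 2 * d = (a - 1) ^ 2 * d - 4 := by
        rw [hs2]; field_simp
      rw [hsd, hx]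
      field_simp
      linear_combination 3 * key
    rw [Matrix.charpoly, Matrix.det_fin_three]
    simp [FHNJac, Matrix.charmatrix_apply, Matrix.vecHead, Matrix.vecTail, hm]
    ring
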